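/- Let q ∈ ℂ with |q| < 1, let F be an odd positive integer, let a be an integer with 0 < a ≤ F, and let s ∈ ℂ. Then the partial q-zeta function satisfies H_q(s, a | F) = (−1)^a q^a F^{−s}·([2]_q/[2]_{q^F})·ζ_{q^F,E}(s, a/F), where H_q(s, a | F) = [2]_q·Σ_{n=0}^{∞} (−1)^{a+nF} q^{a+nF} (a+nF)^{−s} and ζ_{q^F,E}(s, x) = [2]_{q^F}·Σ_{n=0}^{∞} (−1)^n q^{Fn} (n+x)^{−s} for real x > 0; both series converge absolutely for every s ∈ ℂ. -/

import Mathlib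

open Finset

lemma aux_sum (k : ℕ) {r : ℝ} (h1 : r < 1) (h0 : 0 ≤ r) :
    Summable (fun n : ℕ => ((n : ℝ) + 1) ^ k * r ^ n) := by
  have hs : Summable (fun n : ℕ => ∑ j ∈ Finset.range (k + 1),
      (k.choose j : ℝ) * ((n : ℝ) ^ j * r ^ n)) := by
    apply summable_sum
    intro j _
    exact (summable_pow_mul_geometric_of_norm_lt_one j (r := r) (by simpa [abs_of_nonneg h0] using h1)).mul_left _
  refine hs.congr fun n => ?_
  rw [add_pow, Finset.sum_mul]
  exact Finset.sum_congr rfl fun j _ => by ring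

lemma aux_summable {r : ℝ} (h0 : 0 ≤ r) (h1 : r < 1) (t x : ℝ) (hx : 0 < x) (hx1 : x ≤ 1) :
    Summable (fun n : ℕ => r ^ n * Real.exp (t * Real.log ((n : ℝ) + x))) := by
  set k : ℕ := ⌈max t 0⌉₊ with hk
  set C : ℝ := max (Real.exp (t * Real.log x)) 1 with hC
  have hbound : ∀ n : ℕ, Real.exp (t * Real.log ((n : ℝ) + x)) ≤ C * ((n : ℝ) + 1) ^ k := by
    intro n
    rcases Nat.eq_zero_or_pos n with h | h
    · subst h
      simp only [Nat.cast_zero, zero_add, one_pow, mul_one]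
      exact le_max_left _ _
    · have hn1 : (1 : ℝ) ≤ (n : ℝ) + x := by
        have : (1 : ℝ) ≤ (n : ℝ) := by exact_mod_cast h
        linarith
      have hlog : 0 ≤ Real.log ((n : ℝ) + x) := Real.log_nonneg hn1
      have h1' : t * Real.log ((n : ℝ) + x) ≤ (k : ℝ) * Real.log ((n : ℝ) + x) := by
        apply mul_le_mul_of_nonneg_right _ hlog
        calc t ≤ max t 0 := le_max_left _ _
          _ ≤ (k : ℝ) := Nat.le_ceil _
      calc Real.exp (t * Real.log ((n : ℝ) + x)) ≤ Real.exp ((k : ℝ) * Real.log ((n : ℝ) + x)) :=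
            Real.exp_le_exp.mpr h1'
        _ = ((n : ℝ) + x) ^ k := by
            rw [← Real.log_pow, Real.exp_log (by positivity)]
        _ ≤ ((n : ℝ) + 1) ^ k := by
            apply pow_le_pow_left₀ (by positivity) (by linarith)
        _ ≤ C * ((n : ℝ) + 1) ^ k := by
            nlinarith [le_max_right (Real.exp (t * Real.log x)) 1,
              pow_nonneg (by positivity : (0:ℝ) ≤ (n:ℝ)+1) k]
  have hg : Summable (fun n : ℕ => C * (((n : ℝ) + 1) ^ k * r ^ n)) :=
    (aux_sum k h1 h0).mul_left C
  refine Summable.of_nonneg_of_le (fun n => by positivity) (fun n => ?_) hg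
  calc r ^ n * Real.exp (t * Real.log ((n : ℝ) + x))
      ≤ r ^ n * (C * ((n : ℝ) + 1) ^ k) :=
        mul_le_mul_of_nonneg_left (hbound n) (pow_nonneg h0 n)
    _ = C * (((n : ℝ) + 1) ^ k * r ^ n) := by ring

/-- For `q ∈ ℂ` with `|q| < 1`, an odd positive integer `F`, an integer `a` with `0 < a ≤ F`
and `s ∈ ℂ`, the partial `q`-zeta function
`H_q(s,a|F) = [2]_q ∑_{n≥0} (-1)^{a+nF} q^{a+nF} (a+nF)^{-s}` satisfies
`H_q(s,a|F) = (-1)^a q^a F^{-s} ([2]_q/[2]_{q^F}) ζ_{q^F,E}(s,a/F)`, where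
`ζ_{q^F,E}(s,x) = [2]_{q^F} ∑_{n≥0} (-1)^n q^{Fn} (n+x)^{-s}`; both series converge
absolutely (`z^{-s} = exp(-s log z)` with the real logarithm). -/
theorem partial_q_zeta_function_formula (q : ℂ) (hq : ‖q‖ < 1)
    (F : ℕ) (hF : Odd F) (hF0 : 0 < F)
    (a : ℕ) (ha : 0 < a) (haF : a ≤ F) (s : ℂ) :
    Summable (fun n : ℕ =>
      ‖(-1 : ℂ) ^ (a + n * F) * q ^ (a + n * F) *
        Complex.exp (-s * (Real.log ((a : ℝ) + n * F) : ℂ))‖) ∧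
    Summable (fun n : ℕ =>
      ‖(-1 : ℂ) ^ n * q ^ (F * n) *
        Complex.exp (-s * (Real.log ((n : ℝ) + (a : ℝ) / (F : ℝ)) : ℂ))‖) ∧
    (1 + q) *
        ∑' n : ℕ, (-1 : ℂ) ^ (a + n * F) * q ^ (a + n * F) *
          Complex.exp (-s * (Real.log ((a : ℝ) + n * F) : ℂ))
      = (-1 : ℂ) ^ a * q ^ a * Complex.exp (-s * (Real.log (F : ℝ) : ℂ)) *
          ((1 + q) / (1 + q ^ F)) *
          ((1 + q ^ F) *
            ∑' n : ℕ, (-1 : ℂ) ^ n * q ^ (F * n) *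
              Complex.exp (-s * (Real.log ((n : ℝ) + (a : ℝ) / (F : ℝ)) : ℂ))) := by
  have hFpos : (0 : ℝ) < (F : ℝ) := by exact_mod_cast hF0
  have hxpos : (0 : ℝ) < (a : ℝ) / F := by positivity
  have hxle : (a : ℝ) / F ≤ 1 := by
    rw [div_le_one hFpos]; exact_mod_cast haF
  have hr0 : (0 : ℝ) ≤ ‖q‖ ^ F := pow_nonneg (norm_nonneg q) F
  have hr1 : ‖q‖ ^ F < 1 := pow_lt_one₀ (norm_nonneg q) hq hF0.ne'
  set C : ℂ := (-1 : ℂ) ^ a * q ^ a * Complex.exp (-s * (Real.log (F : ℝ) : ℂ)) with hCdef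
  have hlogsplit : ∀ n : ℕ,
      Real.log ((a : ℝ) + n * F) = Real.log F + Real.log ((n : ℝ) + (a : ℝ) / F) := by
    intro n
    have h1 : (a : ℝ) + n * F = F * ((n : ℝ) + (a : ℝ) / F) := by
      field_simp; ring
    rw [h1, Real.log_mul hFpos.ne' (by positivity)]
  have key : ∀ n : ℕ,
      (-1 : ℂ) ^ (a + n * F) * q ^ (a + n * F) *
        Complex.exp (-s * (Real.log ((a : ℝ) + n * F) : ℂ))
      = C * ((-1 : ℂ) ^ n * q ^ (F * n) *
        Complex.exp (-s * (Real.log ((n : ℝ) + (a : ℝ) / (F : ℝ)) : ℂ))) := by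
    intro n
    have hsign : ((-1 : ℂ)) ^ (a + n * F) = (-1) ^ a * (-1) ^ n := by
      rw [pow_add, mul_comm n F, pow_mul, hF.neg_one_pow]
    have hqs : q ^ (a + n * F) = q ^ a * q ^ (F * n) := by
      rw [pow_add, mul_comm n F]
    have hexp : Complex.exp (-s * (Real.log ((a : ℝ) + n * F) : ℂ))
        = Complex.exp (-s * (Real.log (F : ℝ) : ℂ)) *
          Complex.exp (-s * (Real.log ((n : ℝ) + (a : ℝ) / F) : ℂ)) := by
      rw [hlogsplit n, ← Complex.exp_add]
      congr 1
      push_cast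
      ring
    rw [hsign, hqs, hexp, hCdef]
    ring
  have hnorm2 : ∀ n : ℕ,
      (‖q‖ ^ F) ^ n * Real.exp ((-s.re) * Real.log ((n : ℝ) + (a : ℝ) / F))
      = ‖(-1 : ℂ) ^ n * q ^ (F * n) *
          Complex.exp (-s * (Real.log ((n : ℝ) + (a : ℝ) / (F : ℝ)) : ℂ))‖ := by
    intro n
    simp only [norm_mul, norm_pow, norm_neg, norm_one, one_pow, one_mul,
      Complex.norm_exp]
    rw [← pow_mul]
    congr 2
    simp [Complex.mul_re]
  have S2 : Summable (fun n : ℕ =>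
      ‖(-1 : ℂ) ^ n * q ^ (F * n) *
        Complex.exp (-s * (Real.log ((n : ℝ) + (a : ℝ) / (F : ℝ)) : ℂ))‖) :=
    (aux_summable hr0 hr1 (-s.re) ((a : ℝ) / F) hxpos hxle).congr hnorm2
  have S1 : Summable (fun n : ℕ =>
      ‖(-1 : ℂ) ^ (a + n * F) * q ^ (a + n * F) *
        Complex.exp (-s * (Real.log ((a : ℝ) + n * F) : ℂ))‖) := by
    refine (S2.mul_left ‖C‖).congr fun n => ?_
    rw [← norm_mul, ← key n]
  refine ⟨S1, S2, ?_⟩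
  have hden : (1 : ℂ) + q ^ F ≠ 0 := by
    intro h
    have : q ^ F = -1 := by linear_combination h
    have := congrArg norm this
    rw [norm_pow, norm_neg, norm_one] at this
    exact absurd this (ne_of_lt hr1)
  rw [tsum_congr key, tsum_mul_left]
  generalize (∑' n : ℕ, (-1 : ℂ) ^ n * q ^ (F * n) *
    Complex.exp (-s * (Real.log ((n : ℝ) + (a : ℝ) / (F : ℝ)) : ℂ))) = T
  field_simp
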